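/- Fix q > 0. For X ≥ 4q and 0 ≤ d ≤ X - 4q, define V(d;X) = (1/(6q))·(2dX - 2d² + √(X-d)·(X-d-4q)^{3/2} - √X·(X-4q)^{3/2}). Then the third partial derivative of V with respect to d equals 4q²/((X-d)^{5/2}·(X-d-4q)^{3/2}), which is strictly positive whenever X - d > 4q; hence ∂V/∂d is strictly convex in d on [0, X-4q). -/

import Mathlib

/-- The benefit `V(d;X)` of a discovery at distance `d` inside an area of length `X`, when the
farther sub-area still exceeds `4q`. -/
noncomputable def Vdeep (q X d : ℝ) : ℝ :=
  1 / (6 * q) * (2 * d * X - 2 * d ^ 2 + Real.sqrt (X - d) * (X - d - 4 * q) ^ ((3:ℝ)/2)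
    - Real.sqrt X * (X - 4 * q) ^ ((3:ℝ)/2))

/-- First derivative of `Vdeep` w.r.t. `d` (valid for `d < X - 4q`). -/
noncomputable def V1 (q X d : ℝ) : ℝ :=
  1 / (6 * q) * (2 * X - 4 * d
    - 2 * Real.sqrt (X - d - 4 * q) * ((X - d) - q) / Real.sqrt (X - d))

/-- Second derivative of `Vdeep` w.r.t. `d` (valid for `d < X - 4q`). -/
noncomputable def V2 (q X d : ℝ) : ℝ :=
  1 / (6 * q) * (-4 + 2 * ((X - d) ^ 2 - 2 * q * (X - d) - 2 * q ^ 2)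
      / (Real.sqrt (X - d - 4 * q) * ((X - d) * Real.sqrt (X - d))))

/-- Third derivative of `Vdeep` w.r.t. `d` (valid for `d < X - 4q`). -/
noncomputable def V3 (q X d : ℝ) : ℝ :=
  4 * q ^ 2 / (((X - d) ^ 2 * Real.sqrt (X - d))
    * ((X - d - 4 * q) * Real.sqrt (X - d - 4 * q)))

private lemma rpow_32 {v : ℝ} (hv : 0 < v) :
    v ^ ((3:ℝ)/2) = v * Real.sqrt v := by
  rw [show (3:ℝ)/2 = 1 + 1/2 by norm_num, Real.rpow_add hv, Real.rpow_one,
    ← Real.sqrt_eq_rpow]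

private lemma hasDeriv1 (q X d : ℝ) (hq : 0 < q) (hd : d < X - 4 * q) :
    HasDerivAt (Vdeep q X) (V1 q X d) d := by
  have hv : 0 < X - d - 4 * q := by linarith
  have hu : 0 < X - d := by linarith
  have hsub : HasDerivAt (fun y : ℝ => X - y) (-1) d := by
    simpa using (hasDerivAt_id d).const_sub X
  have hsub4 : HasDerivAt (fun y : ℝ => X - y - 4 * q) (-1) d := hsub.sub_const _
  have hs : HasDerivAt (fun y : ℝ => Real.sqrt (X - y)) (-1 / (2 * Real.sqrt (X - d))) d :=
    hsub.sqrt hu.ne'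
  have hr : HasDerivAt (fun y : ℝ => (X - y - 4 * q) ^ ((3:ℝ)/2))
      (-1 * ((3:ℝ)/2) * (X - d - 4 * q) ^ ((3:ℝ)/2 - 1)) d :=
    hsub4.rpow_const (Or.inr (by norm_num))
  have hpoly : HasDerivAt (fun y : ℝ => 2 * y * X - 2 * y ^ 2) (2 * X - 4 * d) d := by
    have h := (((hasDerivAt_id d).const_mul 2).mul_const X).sub
      ((hasDerivAt_pow 2 d).const_mul 2)
    refine (h.congr_deriv ?_).congr_of_eventuallyEq (Filter.Eventually.of_forall fun y => ?_)
    · push_cast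
      ring
    · simp
  have hV : HasDerivAt (Vdeep q X)
      (1 / (6 * q) * (2 * X - 4 * d +
        (-1 / (2 * Real.sqrt (X - d)) * (X - d - 4 * q) ^ ((3:ℝ)/2)
          + Real.sqrt (X - d) * (-1 * ((3:ℝ)/2) * (X - d - 4 * q) ^ ((3:ℝ)/2 - 1))))) d := by
    exact ((hpoly.add (hs.mul hr)).sub_const _).const_mul _
  convert hV using 1
  rw [V1, show (3:ℝ)/2 - 1 = 1/2 by norm_num, ← Real.sqrt_eq_rpow, rpow_32 hv]
  have hs2 : Real.sqrt (X - d) ^ 2 = X - d := Real.sq_sqrt hu.le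
  have hsp : 0 < Real.sqrt (X - d) := Real.sqrt_pos.mpr hu
  have ht2 : Real.sqrt (X - d - 4 * q) ^ 2 = X - d - 4 * q := Real.sq_sqrt hv.le
  set s := Real.sqrt (X - d) with hsdef
  set t := Real.sqrt (X - d - 4 * q) with htdef
  clear_value s t
  clear hsdef htdef hd hv hu hsub hsub4 hs hr hpoly hV
  have hX : X = s ^ 2 + d := by linarith
  subst hX
  have hqe : q = (s ^ 2 - t ^ 2) / 4 := by linarith
  subst hqe
  have hq6 : (6:ℝ) * ((s ^ 2 - t ^ 2) / 4) ≠ 0 := by positivity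
  field_simp
  ring

private lemma hasDeriv2 (q X d : ℝ) (hq : 0 < q) (hd : d < X - 4 * q) :
    HasDerivAt (V1 q X) (V2 q X d) d := by
  have hv : 0 < X - d - 4 * q := by linarith
  have hu : 0 < X - d := by linarith
  have hsp : 0 < Real.sqrt (X - d) := Real.sqrt_pos.mpr hu
  have htp : 0 < Real.sqrt (X - d - 4 * q) := Real.sqrt_pos.mpr hv
  have hsub : HasDerivAt (fun y : ℝ => X - y) (-1) d := by
    simpa using (hasDerivAt_id d).const_sub X
  have hsub4 : HasDerivAt (fun y : ℝ => X - y - 4 * q) (-1) d := hsub.sub_const _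
  have hs : HasDerivAt (fun y : ℝ => Real.sqrt (X - y)) (-1 / (2 * Real.sqrt (X - d))) d :=
    hsub.sqrt hu.ne'
  have ht : HasDerivAt (fun y : ℝ => Real.sqrt (X - y - 4 * q))
      (-1 / (2 * Real.sqrt (X - d - 4 * q))) d := hsub4.sqrt hv.ne'
  have hN : HasDerivAt (fun y : ℝ => 2 * Real.sqrt (X - y - 4 * q) * ((X - y) - q))
      (2 * (-1 / (2 * Real.sqrt (X - d - 4 * q))) * ((X - d) - q)
        + 2 * Real.sqrt (X - d - 4 * q) * (-1)) d :=
    (ht.const_mul 2).mul (hsub.sub_const q)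
  have hQ := hN.div hs hsp.ne'
  have hlin : HasDerivAt (fun y : ℝ => 2 * X - 4 * y) (-4) d := by
    simpa using ((hasDerivAt_id d).const_mul 4).const_sub (2 * X)
  have hV : HasDerivAt (V1 q X)
      (1 / (6 * q) * (-4 -
        ((2 * (-1 / (2 * Real.sqrt (X - d - 4 * q))) * ((X - d) - q)
            + 2 * Real.sqrt (X - d - 4 * q) * (-1)) * Real.sqrt (X - d)
          - 2 * Real.sqrt (X - d - 4 * q) * ((X - d) - q)
            * (-1 / (2 * Real.sqrt (X - d))))
          / Real.sqrt (X - d) ^ 2)) d := (hlin.sub hQ).const_mul _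
  convert hV using 1
  rw [V2]
  have hs2 : Real.sqrt (X - d) ^ 2 = X - d := Real.sq_sqrt hu.le
  have ht2 : Real.sqrt (X - d - 4 * q) ^ 2 = X - d - 4 * q := Real.sq_sqrt hv.le
  set s := Real.sqrt (X - d) with hsdef
  set t := Real.sqrt (X - d - 4 * q) with htdef
  clear_value s t
  clear hsdef htdef hd hv hu hsub hsub4 hs ht hN hQ hlin hV
  have hX : X = s ^ 2 + d := by linarith
  subst hX
  have hqe : q = (s ^ 2 - t ^ 2) / 4 := by linarith
  subst hqe
  have h1 : s ^ 2 - t ^ 2 ≠ 0 := by intro h; rw [h] at hq; norm_num at hq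
  field_simp
  ring

private lemma hasDeriv3 (q X d : ℝ) (hq : 0 < q) (hd : d < X - 4 * q) :
    HasDerivAt (V2 q X) (V3 q X d) d := by
  have hv : 0 < X - d - 4 * q := by linarith
  have hu : 0 < X - d := by linarith
  have hsp : 0 < Real.sqrt (X - d) := Real.sqrt_pos.mpr hu
  have htp : 0 < Real.sqrt (X - d - 4 * q) := Real.sqrt_pos.mpr hv
  have hsub : HasDerivAt (fun y : ℝ => X - y) (-1) d := by
    simpa using (hasDerivAt_id d).const_sub X
  have hsub4 : HasDerivAt (fun y : ℝ => X - y - 4 * q) (-1) d := hsub.sub_const _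
  have hs : HasDerivAt (fun y : ℝ => Real.sqrt (X - y)) (-1 / (2 * Real.sqrt (X - d))) d :=
    hsub.sqrt hu.ne'
  have ht : HasDerivAt (fun y : ℝ => Real.sqrt (X - y - 4 * q))
      (-1 / (2 * Real.sqrt (X - d - 4 * q))) d := hsub4.sqrt hv.ne'
  have hN : HasDerivAt
      (fun y : ℝ => 2 * ((X - y) ^ 2 - 2 * q * (X - y) - 2 * q ^ 2))
      (2 * (2 * (X - d) ^ 1 * (-1) - 2 * q * (-1))) d := by
    have h := (((hsub.pow 2).sub (hsub.const_mul (2 * q))).sub_const (2 * q ^ 2)).const_mul 2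
    refine (h.congr_deriv ?_).congr_of_eventuallyEq (Filter.Eventually.of_forall fun y => ?_)
    · norm_num
    · simp
  have hD : HasDerivAt
      (fun y : ℝ => Real.sqrt (X - y - 4 * q) * ((X - y) * Real.sqrt (X - y)))
      (-1 / (2 * Real.sqrt (X - d - 4 * q)) * ((X - d) * Real.sqrt (X - d))
        + Real.sqrt (X - d - 4 * q)
          * (-1 * Real.sqrt (X - d) + (X - d) * (-1 / (2 * Real.sqrt (X - d))))) d :=
    ht.mul (hsub.mul hs)
  have hDne : Real.sqrt (X - d - 4 * q) * ((X - d) * Real.sqrt (X - d)) ≠ 0 := by positivity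
  have hQ := hN.div hD hDne
  have hV : HasDerivAt (V2 q X)
      (1 / (6 * q) * ((2 * (2 * (X - d) ^ 1 * (-1) - 2 * q * (-1)))
          * (Real.sqrt (X - d - 4 * q) * ((X - d) * Real.sqrt (X - d)))
        - 2 * ((X - d) ^ 2 - 2 * q * (X - d) - 2 * q ^ 2)
          * (-1 / (2 * Real.sqrt (X - d - 4 * q)) * ((X - d) * Real.sqrt (X - d))
            + Real.sqrt (X - d - 4 * q)
              * (-1 * Real.sqrt (X - d) + (X - d) * (-1 / (2 * Real.sqrt (X - d)))))
        )
        / (Real.sqrt (X - d - 4 * q) * ((X - d) * Real.sqrt (X - d))) ^ 2) d := by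
    have h := hQ.const_add (-4 : ℝ)
    have h2 := h.const_mul (1 / (6 * q))
    refine (h2.congr_deriv ?_).congr_of_eventuallyEq (Filter.Eventually.of_forall fun y => ?_)
    · ring
    · simp only [V2, Pi.div_apply]
  convert hV using 1
  rw [V3]
  have hs2 : Real.sqrt (X - d) ^ 2 = X - d := Real.sq_sqrt hu.le
  have ht2 : Real.sqrt (X - d - 4 * q) ^ 2 = X - d - 4 * q := Real.sq_sqrt hv.le
  set s := Real.sqrt (X - d) with hsdef
  set t := Real.sqrt (X - d - 4 * q) with htdef
  clear_value s t
  clear hsdef htdef hd hv hu hsub hsub4 hs ht hN hD hDne hQ hV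
  have hX : X = s ^ 2 + d := by linarith
  subst hX
  have hqe : q = (s ^ 2 - t ^ 2) / 4 := by linarith
  subst hqe
  have h1 : s ^ 2 - t ^ 2 ≠ 0 := by intro h; rw [h] at hq; norm_num at hq
  field_simp
  ring

private lemma deriv1_eq (q X : ℝ) (hq : 0 < q) {d : ℝ} (hd : d < X - 4 * q) :
    deriv (Vdeep q X) d = V1 q X d := (hasDeriv1 q X d hq hd).deriv

private lemma ev1 (q X : ℝ) (hq : 0 < q) {d : ℝ} (hd : d < X - 4 * q) :
    deriv (Vdeep q X) =ᶠ[nhds d] V1 q X := by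
  filter_upwards [isOpen_Iio.mem_nhds (show d ∈ Set.Iio (X - 4 * q) from hd)] with y hy
  exact deriv1_eq q X hq hy

private lemma deriv2_eq (q X : ℝ) (hq : 0 < q) {d : ℝ} (hd : d < X - 4 * q) :
    deriv (deriv (Vdeep q X)) d = V2 q X d := by
  rw [(ev1 q X hq hd).deriv_eq]
  exact (hasDeriv2 q X d hq hd).deriv

private lemma deriv3_eq (q X : ℝ) (hq : 0 < q) {d : ℝ} (hd : d < X - 4 * q) :
    deriv (deriv (deriv (Vdeep q X))) d = V3 q X d := by
  have ev2 : deriv (deriv (Vdeep q X)) =ᶠ[nhds d] V2 q X := by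
    filter_upwards [isOpen_Iio.mem_nhds (show d ∈ Set.Iio (X - 4 * q) from hd)] with y hy
    exact deriv2_eq q X hq hy
  rw [ev2.deriv_eq]
  exact (hasDeriv3 q X d hq hd).deriv

private lemma V3_eq_rpow (q X : ℝ) (hq : 0 < q) {d : ℝ} (hd : d < X - 4 * q) :
    V3 q X d = 4 * q ^ 2 / ((X - d) ^ ((5:ℝ)/2) * (X - d - 4 * q) ^ ((3:ℝ)/2)) := by
  have hv : 0 < X - d - 4 * q := by linarith
  have hu : 0 < X - d := by linarith
  have h52 : (X - d) ^ ((5:ℝ)/2) = (X - d) ^ 2 * Real.sqrt (X - d) := by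
    rw [show (5:ℝ)/2 = ((2:ℕ) : ℝ) + 1/2 by norm_num, Real.rpow_add hu,
      Real.rpow_natCast, ← Real.sqrt_eq_rpow]
  rw [V3, h52, rpow_32 hv]

/-- The third partial derivative of `V(·;X)` equals `4q²/((X-d)^{5/2}(X-d-4q)^{3/2}) > 0`
for `0 ≤ d < X - 4q`; hence `∂V/∂d` is strictly convex in `d` on `[0, X-4q)`. -/
theorem Vdeep_third_deriv (q X : ℝ) (hq : 0 < q) (hX : 4 * q ≤ X) :
    (∀ d : ℝ, 0 ≤ d → d < X - 4 * q →
      deriv (deriv (deriv (Vdeep q X))) d =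
        4 * q ^ 2 / ((X - d) ^ ((5:ℝ)/2) * (X - d - 4 * q) ^ ((3:ℝ)/2)) ∧
      0 < 4 * q ^ 2 / ((X - d) ^ ((5:ℝ)/2) * (X - d - 4 * q) ^ ((3:ℝ)/2))) ∧
    StrictConvexOn ℝ (Set.Ico 0 (X - 4 * q)) (deriv (Vdeep q X)) := by
  constructor
  · intro d _ hd
    have hv : 0 < X - d - 4 * q := by linarith
    have hu : 0 < X - d := by linarith
    refine ⟨?_, ?_⟩
    · rw [deriv3_eq q X hq hd, V3_eq_rpow q X hq hd]
    · exact div_pos (by positivity)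
        (mul_pos (Real.rpow_pos_of_pos hu _) (Real.rpow_pos_of_pos hv _))
  · apply strictConvexOn_of_deriv2_pos (convex_Ico 0 (X - 4 * q))
    · intro x hx
      have hx2 : x < X - 4 * q := hx.2
      have hcV1 : ContinuousAt (V1 q X) x := (hasDeriv2 q X x hq hx2).continuousAt
      exact (hcV1.congr (ev1 q X hq hx2).symm).continuousWithinAt
    · intro x hx
      rw [interior_Ico] at hx
      have hx2 : x < X - 4 * q := hx.2
      have : deriv^[2] (deriv (Vdeep q X)) x = deriv (deriv (deriv (Vdeep q X))) x := by
        simp [Function.iterate_succ, Function.comp]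
      rw [this, deriv3_eq q X hq hx2, V3]
      have hv : 0 < X - x - 4 * q := by linarith
      have hu : 0 < X - x := by linarith
      have hsp : 0 < Real.sqrt (X - x) := Real.sqrt_pos.mpr hu
      have htp : 0 < Real.sqrt (X - x - 4 * q) := Real.sqrt_pos.mpr hv
      positivity
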